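/- Let Z_d be a chi-square random variable with d degrees of freedom (d a positive integer). Then for all x > 0, P(Z_d - d ≥ x·√(2d)) ≤ exp(-x²/(2·(1 + x·√(2/d)))). -/

import Mathlib

open MeasureTheory ProbabilityTheory Real
open scoped ENNReal NNReal

lemma log_aux {u : ℝ} (hu : 0 ≤ u) :
    Real.log (1 + u) ≤ (u ^ 2 + 2 * u) / (2 * (1 + u)) := by
  have h1 : (0:ℝ) < 1 + u := by linarith
  have hv : 0 ≤ Real.log (1 + u) := Real.log_nonneg (by linarith)
  have hs : Real.log (1 + u) ≤ Real.sinh (Real.log (1 + u)) := by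
    rcases eq_or_lt_of_le hv with h | h
    · simp [← h]
    · exact (Real.self_lt_sinh_iff.mpr h).le
  refine hs.trans_eq ?_
  rw [Real.sinh_eq, Real.exp_log h1, Real.exp_neg, Real.exp_log h1]
  field_simp
  ring

lemma pdf_mul {t : ℝ} (y : ℝ) :
    gaussianPDFReal 0 1 y * Real.exp (t * y ^ 2)
      = (Real.sqrt (2 * π))⁻¹ * Real.exp (-(1/2 - t) * y ^ 2) := by
  simp only [gaussianPDFReal, NNReal.coe_one, mul_one, sub_zero]
  rw [mul_assoc, ← Real.exp_add]
  ring_nf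

lemma gauss_withDensity :
    gaussianReal 0 1 = volume.withDensity
      (fun y => ((gaussianPDFReal 0 1 y).toNNReal : ℝ≥0∞)) := by
  rw [gaussianReal_of_var_ne_zero 0 one_ne_zero]
  rfl

lemma integrable_exp_sq_gaussian {t : ℝ} (ht : t < 1/2) :
    Integrable (fun y => Real.exp (t * y ^ 2)) (gaussianReal 0 1) := by
  rw [gauss_withDensity,
    integrable_withDensity_iff_integrable_smul
      (measurable_gaussianPDFReal 0 1).real_toNNReal]
  have : (fun y => ((gaussianPDFReal 0 1 y).toNNReal : ℝ≥0) • Real.exp (t * y ^ 2))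
      = fun y => (Real.sqrt (2 * π))⁻¹ * Real.exp (-(1/2 - t) * y ^ 2) := by
    funext y
    rw [NNReal.smul_def, Real.coe_toNNReal _ (gaussianPDFReal_nonneg 0 1 y), smul_eq_mul, pdf_mul]
  rw [this]
  exact (integrable_exp_neg_mul_sq (by linarith)).const_mul _

lemma integral_exp_sq_gaussian {t : ℝ} (ht : t < 1/2) :
    ∫ y, Real.exp (t * y ^ 2) ∂(gaussianReal 0 1) = (Real.sqrt (1 - 2 * t))⁻¹ := by
  have hb : (0:ℝ) < 1/2 - t := by linarith
  rw [gauss_withDensity,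
    integral_withDensity_eq_integral_smul
      (measurable_gaussianPDFReal 0 1).real_toNNReal]
  have h1 : (fun y => ((gaussianPDFReal 0 1 y).toNNReal : ℝ≥0) • Real.exp (t * y ^ 2))
      = fun y => (Real.sqrt (2 * π))⁻¹ * Real.exp (-(1/2 - t) * y ^ 2) := by
    funext y
    rw [NNReal.smul_def, Real.coe_toNNReal _ (gaussianPDFReal_nonneg 0 1 y), smul_eq_mul, pdf_mul]
  rw [h1, integral_const_mul, integral_gaussian]
  have h2 : Real.sqrt (π / (1/2 - t)) = Real.sqrt (2 * π) * (Real.sqrt (1 - 2 * t))⁻¹ := by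
    rw [← Real.sqrt_inv, ← Real.sqrt_mul (by positivity)]
    congr 1
    field_simp
  rw [h2, ← mul_assoc, inv_mul_cancel₀ (by positivity), one_mul]

lemma integrable_exp_sq {Ω : Type*} [MeasureSpace Ω] {W : Ω → ℝ} (hm : Measurable W)
    (hg : Measure.map W ℙ = gaussianReal 0 1) {t : ℝ} (ht : t < 1/2) :
    Integrable (fun ω => Real.exp (t * W ω ^ 2)) ℙ := by
  have hc : Continuous fun y : ℝ => Real.exp (t * y ^ 2) := by continuity
  have := (integrable_map_measure (hc.aestronglyMeasurable) hm.aemeasurable).mp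
    (by rw [hg]; exact integrable_exp_sq_gaussian ht)
  exact this

lemma mgf_sq {Ω : Type*} [MeasureSpace Ω] {W : Ω → ℝ} (hm : Measurable W)
    (hg : Measure.map W ℙ = gaussianReal 0 1) {t : ℝ} (ht : t < 1/2) :
    mgf (fun ω => W ω ^ 2) ℙ t = (Real.sqrt (1 - 2 * t))⁻¹ := by
  have hc : Continuous fun y : ℝ => Real.exp (t * y ^ 2) := by continuity
  rw [mgf]
  calc ∫ ω, Real.exp (t * W ω ^ 2) ∂ℙ
      = ∫ y, Real.exp (t * y ^ 2) ∂(Measure.map W ℙ) :=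
        (integral_map hm.aemeasurable hc.aestronglyMeasurable).symm
    _ = (Real.sqrt (1 - 2 * t))⁻¹ := by rw [hg]; exact integral_exp_sq_gaussian ht


/-- Chi-square tail bound (Lemma B.2): `Z_d` is realized as the sum of squares of
`d` i.i.d. standard Gaussian random variables. -/
theorem stmt_4 {Ω : Type*} [MeasureSpace Ω] [IsProbabilityMeasure (ℙ : Measure Ω)]
    (d : ℕ) (hd : 1 ≤ d) (W : Fin d → Ω → ℝ)
    (hmeas : ∀ i, Measurable (W i))
    (hindep : iIndepFun W ℙ)
    (hgauss : ∀ i, Measure.map (W i) ℙ = gaussianReal 0 1)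
    (x : ℝ) (hx : 0 < x) :
    (ℙ {ω | x * Real.sqrt (2 * d) ≤ (∑ i, (W i ω) ^ 2) - d}).toReal
      ≤ Real.exp (-(x ^ 2) / (2 * (1 + x * Real.sqrt (2 / d)))) := by
  have hD : (1:ℝ) ≤ (d:ℝ) := by exact_mod_cast hd
  set D : ℝ := (d:ℝ) with hDdef
  have hDpos : (0:ℝ) < D := by linarith
  set s : ℝ := x * Real.sqrt (2 * D) with hsdef
  have hs : 0 < s := mul_pos hx (Real.sqrt_pos.mpr (by linarith))
  have hDs : 0 < D + s := by linarith
  set t : ℝ := s / (2 * (D + s)) with htdef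
  have ht0 : 0 < t := by positivity
  have ht : t < 1/2 := by
    rw [htdef, div_lt_iff₀ (by positivity)]
    linarith
  have h1t : 1 - 2*t = D / (D + s) := by
    rw [htdef]; field_simp; ring
  have h1t' : 0 < 1 - 2*t := by rw [h1t]; positivity
  -- the event
  have hset : {ω | x * Real.sqrt (2 * D) ≤ (∑ i, (W i ω) ^ 2) - D}
      = {ω | D + s ≤ ∑ i, W i ω ^ 2} := by
    ext ω; simp only [Set.mem_setOf_eq, hsdef]; constructor <;> intro h <;> linarith
  -- independence of squares
  have hmeas2 : ∀ i, Measurable fun ω => W i ω ^ 2 := fun i => (hmeas i).pow_const 2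
  have hindep2 : iIndepFun (fun i (ω : Ω) => W i ω ^ 2) ℙ :=
    hindep.comp (fun _ (y : ℝ) => y ^ 2) (fun _ => measurable_id.pow_const 2)
  -- integrability
  have hint : Integrable (fun ω => Real.exp (t * ∑ i, W i ω ^ 2)) ℙ := by
    have := hindep2.integrable_exp_mul_sum (fun i => hmeas2 i) (s := Finset.univ)
      (fun i _ => integrable_exp_sq (hmeas i) (hgauss i) ht)
    simpa [Finset.sum_apply] using this
  -- Chernoff
  have hcher := measure_ge_le_exp_mul_mgf (X := fun ω => ∑ i, W i ω ^ 2) (μ := ℙ)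
    (D + s) ht0.le hint
  -- mgf value
  have hmgf : mgf (fun ω => ∑ i, W i ω ^ 2) ℙ t = ((Real.sqrt (1 - 2*t))⁻¹) ^ d := by
    have he : (fun ω => ∑ i, W i ω ^ 2) = ∑ i : Fin d, (fun ω => W i ω ^ 2) := by
      funext ω; simp [Finset.sum_apply]
    rw [he, hindep2.mgf_sum (fun i => hmeas2 i) Finset.univ,
      Finset.prod_congr rfl (fun i _ => mgf_sq (hmeas i) (hgauss i) ht),
      Finset.prod_const, Finset.card_univ, Fintype.card_fin]
  rw [hset]
  refine (hcher.trans_eq (by rw [hmgf])).trans ?_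
  -- numeric bound
  have hsqpos : 0 < (Real.sqrt (1 - 2*t))⁻¹ := by positivity
  have hpow : ((Real.sqrt (1 - 2*t))⁻¹) ^ d
      = Real.exp (-(D/2) * Real.log (1 - 2*t)) := by
    rw [← Real.exp_log (pow_pos hsqpos d), Real.log_pow, Real.log_inv,
      Real.log_sqrt h1t'.le]
    congr 1
    rw [hDdef]; push_cast; ring
  rw [hpow, ← Real.exp_add]
  apply Real.exp_le_exp.mpr
  have ha : -t * (D + s) = -s/2 := by
    rw [htdef]; field_simp
  have hlog : Real.log (1 - 2*t) = - Real.log (1 + s/D) := by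
    rw [h1t, show D/(D+s) = (1 + s/D)⁻¹ by field_simp, Real.log_inv]
  rw [ha, hlog]
  have hu := log_aux (u := s/D) (by positivity)
  have hx2 : x^2 = s^2/(2*D) := by
    rw [hsdef, mul_pow, Real.sq_sqrt (by positivity : (0:ℝ) ≤ 2*D)]
    field_simp
  have hsr : x * Real.sqrt (2/D) = s/D := by
    rw [hsdef, show (2:ℝ)/D = (2*D)/D^2 by field_simp,
      Real.sqrt_div (by positivity), Real.sqrt_sq hDpos.le, mul_div_assoc]
  rw [hx2, hsr]
  have h1u : (0:ℝ) < 1 + s/D := by positivity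
  have hstep : -s/2 + (D/2) * (((s/D)^2 + 2*(s/D)) / (2*(1+s/D)))
      = -(s^2/(2*D)) / (2*(1+s/D)) := by
    field_simp
    ring
  calc -s/2 + -(D/2) * -Real.log (1 + s/D)
      = -s/2 + (D/2) * Real.log (1 + s/D) := by ring
    _ ≤ -s/2 + (D/2) * (((s/D)^2 + 2*(s/D)) / (2*(1+s/D))) := by
        have := mul_le_mul_of_nonneg_left hu (by positivity : (0:ℝ) ≤ D/2)
        linarith
    _ = -(s^2/(2*D)) / (2*(1+s/D)) := hstep
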